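/- Assume the minus-infinity-order Rényi entropy rate ℋ₋∞ exists and is finite, and that there exists η > 0 such that d(s) ≤ s^{−(β·ℋ₋∞+η)} for all integers s ≥ 1. Then there is a sequence ξ(n) with ξ(n) → 1 as n → ∞ such that, for all sufficiently large n and all pairs x¹, x² ∈ 𝒳^{ℓ(n)}: P[X^ℓ(1) = x¹, X^ℓ(2) = x² | T = 0] ≥ ξ(n) · P_{X₁^ℓ}(x¹) · P_{X₁^ℓ}(x²). -/

import Mathlib

open MeasureTheory Filter Real

section

variable {𝒳 : Type*} [Fintype 𝒳] [MeasurableSpace 𝒳] [MeasurableSingletonClass 𝒳]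

/-- The left shift on two-sided sequences. -/
def shift {𝒳 : Type*} : (ℤ → 𝒳) → (ℤ → 𝒳) := fun ω i => ω (i + 1)

/-- The pmf of the block `(X_a, …, X_{a+t-1})` under `μ`. -/
noncomputable def blockPmf (μ : Measure (ℤ → 𝒳)) (a : ℤ) (t : ℕ) (x : Fin t → 𝒳) : ℝ :=
  (μ {ω | ∀ i : Fin t, ω (a + ((i : ℕ) : ℤ)) = x i}).toReal

/-- Shannon entropy of the block `(X_1, …, X_t)`. -/
noncomputable def shannonH (μ : Measure (ℤ → 𝒳)) (t : ℕ) : ℝ :=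
  ∑ x : Fin t → 𝒳, Real.negMulLog (blockPmf μ 1 t x)

/-- Order-`α` Rényi entropy of the block `(X_1, …, X_t)`. -/
noncomputable def renyiH (μ : Measure (ℤ → 𝒳)) (α : ℝ) (t : ℕ) : ℝ :=
  (1 - α)⁻¹ * Real.log (∑ x : Fin t → 𝒳, blockPmf μ 1 t x ^ α)

/-- `max_{x : P(x) > 0} log (1 / P_{X_1^t}(x))`. -/
noncomputable def maxInfo (μ : Measure (ℤ → 𝒳)) (t : ℕ) : ℝ :=
  sSup {r : ℝ | ∃ x : Fin t → 𝒳, 0 < blockPmf μ 1 t x ∧ r = Real.log (1 / blockPmf μ 1 t x)}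

/-- The σ-algebra generated by the coordinates with index `≤ i`. -/
def pastSigma (𝒳 : Type*) [MeasurableSpace 𝒳] (i : ℤ) : MeasurableSpace (ℤ → 𝒳) :=
  MeasurableSpace.comap (fun ω (j : {j : ℤ // j ≤ i}) => ω (j : ℤ)) inferInstance

/-- The σ-algebra generated by the coordinates with index `≥ i`. -/
def futureSigma (𝒳 : Type*) [MeasurableSpace 𝒳] (i : ℤ) : MeasurableSpace (ℤ → 𝒳) :=
  MeasurableSpace.comap (fun ω (j : {j : ℤ // i ≤ j}) => ω (j : ℤ)) inferInstance

/-- Strong mixing coefficient `d(s)`. -/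
noncomputable def mixCoef (μ : Measure (ℤ → 𝒳)) (s : ℕ) : ℝ :=
  sSup {r : ℝ | ∃ (i : ℤ) (E F : Set (ℤ → 𝒳)),
    MeasurableSet[pastSigma 𝒳 i] E ∧ MeasurableSet[futureSigma 𝒳 (i + (s : ℤ))] F ∧
    μ E ≠ 0 ∧ r = |(μ (F ∩ E)).toReal / (μ E).toReal - (μ F).toReal|}

/-- The read length `ℓ(n) = ⌈β log n⌉`. -/
noncomputable def ell (β : ℝ) (n : ℕ) : ℕ := ⌈β * Real.log n⌉₊

/-- The window from which `I(2)` is drawn uniformly, given `I(1) = i₁`. -/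
noncomputable def window (n L : ℕ) (i₁ : ℤ) : Finset ℤ :=
  if i₁ ≤ (L : ℤ) - 1 then Finset.Icc (i₁ - (L : ℤ) + 1) (i₁ + (n : ℤ) - (L : ℤ))
  else if i₁ ≤ (n : ℤ) - (L : ℤ) + 1 then Finset.Icc 1 (n : ℤ)
  else Finset.Icc (i₁ + (L : ℤ) - (n : ℤ)) (i₁ + (L : ℤ) - 1)

/-- Joint pmf of the pair of starting indices `(I(1), I(2))`. -/
noncomputable def idxWeight (n L : ℕ) (i₁ i₂ : ℤ) : ℝ :=
  if i₁ ∈ Finset.Icc 1 (n : ℤ) ∧ i₂ ∈ window n L i₁ then (((n : ℝ)) ^ 2)⁻¹ else 0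

/-- The (signed) overlap between the two reads. -/
def overlap (L : ℕ) (i₁ i₂ : ℤ) : ℤ :=
  if i₁ ≤ i₂ then max 0 ((L : ℤ) - (i₂ - i₁)) else -(max 0 ((L : ℤ) - (i₁ - i₂)))

/-- Bayesian error probability of the detector `That` in the noiseless setting. -/
noncomputable def errProb (μ : Measure (ℤ → 𝒳)) (n L : ℕ)
    (That : (Fin L → 𝒳) → (Fin L → 𝒳) → ℤ) : ℝ :=
  ∑' p : ℤ × ℤ, idxWeight n L p.1 p.2 *
    (μ {ω | That (fun k => ω (p.1 + ((k : ℕ) : ℤ))) (fun k => ω (p.2 + ((k : ℕ) : ℤ))) ≠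
        overlap L p.1 p.2}).toReal

/-- Minimal Bayesian error probability over all detectors with values in `𝒯`. -/
noncomputable def Pstar (μ : Measure (ℤ → 𝒳)) (β : ℝ) (n : ℕ) : ℝ :=
  sInf {e : ℝ | ∃ That : (Fin (ell β n) → 𝒳) → (Fin (ell β n) → 𝒳) → ℤ,
    (∀ y₁ y₂, That y₁ y₂ ∈ Set.Icc (1 - (ell β n : ℤ)) ((ell β n : ℤ))) ∧
    e = errProb μ n (ell β n) That}


/-! ### Auxiliary lemmas -/

section Aux

def blk {𝒳 : Type*} (a : ℤ) (t : ℕ) (x : Fin t → 𝒳) : Set (ℤ → 𝒳) :=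
  {ω | ∀ i : Fin t, ω (a + ((i : ℕ) : ℤ)) = x i}

lemma blk_measurable (a : ℤ) (t : ℕ) (x : Fin t → 𝒳) : MeasurableSet (blk a t x) := by
  have : blk a t x = ⋂ i : Fin t, (fun ω : ℤ → 𝒳 => ω (a + ((i : ℕ) : ℤ))) ⁻¹' {x i} := by
    ext ω; simp [blk, Set.mem_iInter]
  rw [this]
  exact MeasurableSet.iInter fun i => (measurable_pi_apply _) (measurableSet_singleton _)

lemma shift_preimage_blk {𝒳 : Type*} (a : ℤ) (t : ℕ) (x : Fin t → 𝒳) :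
    shift ⁻¹' (blk a t x) = blk (a + 1) t x := by
  ext ω
  simp only [blk, Set.mem_preimage, Set.mem_setOf_eq, shift]
  constructor
  · intro h i; have := h i; rwa [add_right_comm] at this
  · intro h i; have := h i; rw [add_right_comm]; exact this

lemma blockPmf_blk (μ : Measure (ℤ → 𝒳)) (a : ℤ) (t : ℕ) (x : Fin t → 𝒳) :
    blockPmf μ a t x = (μ (blk a t x)).toReal := rfl

lemma blockPmf_stationary (μ : Measure (ℤ → 𝒳)) (hmp : MeasurePreserving (shift (𝒳 := 𝒳)) μ μ)
    (a : ℤ) (t : ℕ) (x : Fin t → 𝒳) : blockPmf μ a t x = blockPmf μ 1 t x := by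
  have step : ∀ b : ℤ, blockPmf μ (b + 1) t x = blockPmf μ b t x := by
    intro b
    rw [blockPmf_blk, blockPmf_blk, ← shift_preimage_blk,
      hmp.measure_preimage (blk_measurable b t x).nullMeasurableSet]
  have key : ∀ b : ℤ, blockPmf μ b t x = blockPmf μ 0 t x := by
    intro b
    induction b using Int.induction_on with
    | zero => rfl
    | succ k ih => rw [show ((k:ℤ)+1) = (k:ℤ) + 1 by ring, step, ih]
    | pred k ih =>
        have h2 := step (-(k:ℤ) - 1)
        rw [show (-(k:ℤ) - 1 + 1) = -(k:ℤ) by ring] at h2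
        exact h2.symm.trans ih
  rw [key a, ← key 1]

lemma blk_mem_past {i a : ℤ} {t : ℕ} (x : Fin t → 𝒳) (h : a + t - 1 ≤ i) :
    MeasurableSet[pastSigma 𝒳 i] (blk a t x) := by
  have hk : ∀ k : Fin t, a + (k : ℕ) ≤ i := by
    intro k
    have : ((k : ℕ) : ℤ) ≤ (t : ℤ) - 1 := by
      have := k.isLt; omega
    omega
  refine ⟨{f : {j : ℤ // j ≤ i} → 𝒳 | ∀ k : Fin t, f ⟨a + (k : ℕ), hk k⟩ = x k}, ?_, ?_⟩
  · have : {f : {j : ℤ // j ≤ i} → 𝒳 | ∀ k : Fin t, f ⟨a + (k : ℕ), hk k⟩ = x k}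
        = ⋂ k : Fin t, (fun f : {j : ℤ // j ≤ i} → 𝒳 => f ⟨a + (k : ℕ), hk k⟩) ⁻¹' {x k} := by
      ext f; simp [Set.mem_iInter]
    rw [this]
    exact MeasurableSet.iInter fun k => (measurable_pi_apply _) (measurableSet_singleton _)
  · ext ω; simp [blk]

lemma blk_mem_future {i a : ℤ} {t : ℕ} (x : Fin t → 𝒳) (h : i ≤ a) :
    MeasurableSet[futureSigma 𝒳 i] (blk a t x) := by
  have hk : ∀ k : Fin t, i ≤ a + (k : ℕ) := by
    intro k
    have : (0:ℤ) ≤ (k : ℕ) := by positivity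
    omega
  refine ⟨{f : {j : ℤ // i ≤ j} → 𝒳 | ∀ k : Fin t, f ⟨a + (k : ℕ), hk k⟩ = x k}, ?_, ?_⟩
  · have : {f : {j : ℤ // i ≤ j} → 𝒳 | ∀ k : Fin t, f ⟨a + (k : ℕ), hk k⟩ = x k}
        = ⋂ k : Fin t, (fun f : {j : ℤ // i ≤ j} → 𝒳 => f ⟨a + (k : ℕ), hk k⟩) ⁻¹' {x k} := by
      ext f; simp [Set.mem_iInter]
    rw [this]
    exact MeasurableSet.iInter fun k => (measurable_pi_apply _) (measurableSet_singleton _)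
  · ext ω; simp [blk]

lemma mix_bound (μ : Measure (ℤ → 𝒳)) [IsProbabilityMeasure μ] {s : ℕ} {i : ℤ}
    {E F : Set (ℤ → 𝒳)} (hE : MeasurableSet[pastSigma 𝒳 i] E)
    (hF : MeasurableSet[futureSigma 𝒳 (i + (s : ℤ))] F) (hE0 : μ E ≠ 0) :
    |(μ (F ∩ E)).toReal / (μ E).toReal - (μ F).toReal| ≤ mixCoef μ s := by
  apply le_csSup
  · refine ⟨1, ?_⟩
    rintro r ⟨i', E', F', hE', hF', hE0', rfl⟩
    have h1 : (μ (F' ∩ E')).toReal ≤ (μ E').toReal :=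
      ENNReal.toReal_mono (measure_ne_top μ E') (measure_mono Set.inter_subset_right)
    have h2 : 0 < (μ E').toReal :=
      ENNReal.toReal_pos hE0' (measure_ne_top μ E')
    have h3 : (μ F').toReal ≤ 1 := by
      have := prob_le_one (μ := μ) (s := F')
      exact ENNReal.toReal_le_of_le_ofReal one_pos.le (by simpa)
    have h4 : 0 ≤ (μ F').toReal := ENNReal.toReal_nonneg
    have h5 : (μ (F' ∩ E')).toReal / (μ E').toReal ≤ 1 := div_le_one_of_le₀ h1 h2.le
    have h6 : 0 ≤ (μ (F' ∩ E')).toReal / (μ E').toReal := by positivity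
    rw [abs_sub_le_iff]; constructor <;> linarith
  · exact ⟨i, E, F, hE, hF, hE0, rfl⟩

lemma blockPmf_le_one (μ : Measure (ℤ → 𝒳)) [IsProbabilityMeasure μ] (a : ℤ) (t : ℕ)
    (x : Fin t → 𝒳) : blockPmf μ a t x ≤ 1 := by
  have := prob_le_one (μ := μ) (s := {ω | ∀ i : Fin t, ω (a + ((i : ℕ) : ℤ)) = x i})
  unfold blockPmf
  exact ENNReal.toReal_le_of_le_ofReal one_pos.le (by simpa)

lemma maxInfo_nonneg (μ : Measure (ℤ → 𝒳)) [IsProbabilityMeasure μ] (t : ℕ) :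
    0 ≤ maxInfo μ t := by
  apply Real.sSup_nonneg
  rintro r ⟨x, hx, rfl⟩
  apply Real.log_nonneg
  rw [le_div_iff₀ hx]
  simpa using blockPmf_le_one μ 1 t x

lemma pmin_bound (μ : Measure (ℤ → 𝒳)) [IsProbabilityMeasure μ] (t : ℕ) (x : Fin t → 𝒳)
    (hx : 0 < blockPmf μ 1 t x) : Real.exp (-(maxInfo μ t)) ≤ blockPmf μ 1 t x := by
  have hmem : Real.log (1 / blockPmf μ 1 t x) ≤ maxInfo μ t := by
    apply le_csSup
    · apply Set.Finite.bddAbove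
      apply Set.Finite.subset
        (Set.finite_range (fun y : Fin t → 𝒳 => Real.log (1 / blockPmf μ 1 t y)))
      rintro r ⟨y, _, rfl⟩; exact ⟨y, rfl⟩
    · exact ⟨x, hx, rfl⟩
  have h1 : 1 / blockPmf μ 1 t x ≤ Real.exp (maxInfo μ t) := by
    calc 1 / blockPmf μ 1 t x = Real.exp (Real.log (1 / blockPmf μ 1 t x)) :=
          (Real.exp_log (by positivity)).symm
      _ ≤ _ := Real.exp_le_exp.mpr hmem
  rw [Real.exp_neg]
  rw [div_le_iff₀ hx] at h1
  rw [inv_le_iff_one_le_mul₀ (Real.exp_pos _)]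
  linarith [mul_comm (Real.exp (maxInfo μ t)) (blockPmf μ 1 t x)]

lemma key_exp_ineq {β H η : ℝ} (hβ : 0 < β) (hH : 0 ≤ H) (hη : 0 < η) {n : ℕ} (hn : 1 ≤ n)
    {L : ℕ} (hL : (L : ℝ) ≤ β * Real.log n + 1) :
    (n:ℝ) ^ (-(β*H + η/2)) ≤
      Real.exp (H + η/(4*β)) * (n:ℝ)^(-(η/4)) * Real.exp (-(L:ℝ)*(H + η/(4*β))) := by
  have hn0 : (0:ℝ) < n := by exact_mod_cast hn
  have hy : 0 ≤ Real.log n := Real.log_nonneg (by exact_mod_cast hn)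
  set y := Real.log n with hydef
  rw [Real.rpow_def_of_pos hn0, Real.rpow_def_of_pos hn0, ← Real.exp_add, ← Real.exp_add]
  apply Real.exp_le_exp.mpr
  have hLy : (L:ℝ) * (H + η/(4*β)) ≤ (β*y + 1) * (H + η/(4*β)) := by
    apply mul_le_mul_of_nonneg_right hL
    positivity
  have hbe : β * (η/(4*β)) = η/4 := by field_simp
  nlinarith [mul_nonneg hy hH]

lemma rpow_gap_bound {β H η θ : ℝ} (hθ : θ * (β*H + η) = β*H + η/2)
    (hpos : 0 < β*H + η) {n s : ℕ} (hn : 1 ≤ n) (hs : (n:ℝ)^θ ≤ (s:ℝ)) :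
    (s:ℝ) ^ (-(β*H + η)) ≤ (n:ℝ) ^ (-(β*H + η/2)) := by
  have hn0 : (0:ℝ) < n := by exact_mod_cast hn
  have h0 : (0:ℝ) < (n:ℝ)^θ := Real.rpow_pos_of_pos hn0 θ
  calc (s:ℝ) ^ (-(β*H + η)) ≤ ((n:ℝ)^θ) ^ (-(β*H + η)) :=
        Real.rpow_le_rpow_of_nonpos h0 hs (by linarith)
    _ = (n:ℝ) ^ (θ * (-(β*H+η))) := by rw [← Real.rpow_mul hn0.le]
    _ = (n:ℝ) ^ (-(β*H + η/2)) := by rw [show θ * (-(β*H+η)) = -(θ*(β*H+η)) by ring, hθ]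

lemma pair_bound (μ : Measure (ℤ → 𝒳)) [IsProbabilityMeasure μ]
    (hmp : MeasurePreserving (shift (𝒳 := 𝒳)) μ μ) {t s : ℕ} {a b : ℤ}
    (hab : b = a + t - 1 + s) (xa xb : Fin t → 𝒳)
    (hPa : 0 < blockPmf μ 1 t xa) {d : ℝ} (hd : mixCoef μ s ≤ d) :
    (blockPmf μ 1 t xb - d) * blockPmf μ 1 t xa ≤
      (μ (blk a t xa ∩ blk b t xb)).toReal := by
  have hE : MeasurableSet[pastSigma 𝒳 (a + t - 1)] (blk a t xa) := blk_mem_past xa le_rfl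
  have hF : MeasurableSet[futureSigma 𝒳 (a + t - 1 + (s:ℤ))] (blk b t xb) :=
    blk_mem_future xb (by omega)
  have hEa : (μ (blk a t xa)).toReal = blockPmf μ 1 t xa := by
    rw [← blockPmf_blk]; exact blockPmf_stationary μ hmp a t xa
  have hFb : (μ (blk b t xb)).toReal = blockPmf μ 1 t xb := by
    rw [← blockPmf_blk]; exact blockPmf_stationary μ hmp b t xb
  have hE0 : μ (blk a t xa) ≠ 0 := by
    intro h
    rw [h, ENNReal.toReal_zero] at hEa
    exact hPa.ne' hEa.symm
  have hEpos : 0 < (μ (blk a t xa)).toReal := by rw [hEa]; exact hPa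
  have hmix := (mix_bound μ hE hF hE0).trans hd
  have h1 : blockPmf μ 1 t xb - d ≤
      (μ (blk b t xb ∩ blk a t xa)).toReal / (μ (blk a t xa)).toReal := by
    have habs := (abs_le.mp hmix).1
    rw [← hFb]; linarith
  rw [Set.inter_comm, ← hEa]
  exact (le_div_iff₀ hEpos).mp h1

end Aux

section Counting

noncomputable def T0set (n L : ℕ) : Finset (ℤ × ℤ) :=
  ((Finset.Icc 1 (n:ℤ)) ×ˢ (Finset.Icc (2-(L:ℤ)) ((n:ℤ)+L-1))).filter
    (fun p => p.2 ∈ window n L p.1 ∧ overlap L p.1 p.2 = 0)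

noncomputable def Gset (n L g : ℕ) : Finset (ℤ × ℤ) :=
  ((Finset.Icc (L:ℤ) ((n:ℤ)-L+1)) ×ˢ (Finset.Icc 1 (n:ℤ))).filter
    (fun p => p.1 + L - 1 + g ≤ p.2 ∨ p.2 + (L:ℤ) - 1 + g ≤ p.1)

lemma mem_window_middle {n L : ℕ} {i₁ : ℤ} (h1 : (L:ℤ) ≤ i₁) (h2 : i₁ ≤ (n:ℤ) - L + 1) :
    window n L i₁ = Finset.Icc 1 (n:ℤ) := by
  rw [window, if_neg (by omega), if_pos h2]

lemma window_subset {n L : ℕ} (hL : 1 ≤ L) {i₁ i₂ : ℤ} (h : i₂ ∈ window n L i₁) (h1 : 1 ≤ i₁)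
    (h2 : i₁ ≤ (n:ℤ)) : i₂ ∈ Finset.Icc (2-(L:ℤ)) ((n:ℤ)+L-1) := by
  rw [Finset.mem_Icc]
  rw [window] at h
  split_ifs at h <;> rw [Finset.mem_Icc] at h <;> omega

lemma Gsub {n L g : ℕ} (hL : 1 ≤ L) (hg : 1 ≤ g) : Gset n L g ⊆ T0set n L := by
  intro p hp
  rw [Gset, Finset.mem_filter, Finset.mem_product, Finset.mem_Icc, Finset.mem_Icc] at hp
  obtain ⟨⟨h1, h2⟩, hd⟩ := hp
  have hw : window n L p.1 = Finset.Icc 1 (n:ℤ) := mem_window_middle h1.1 h1.2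
  rw [T0set, Finset.mem_filter, Finset.mem_product, Finset.mem_Icc, Finset.mem_Icc]
  refine ⟨⟨⟨by omega, by omega⟩, by omega⟩, ?_, ?_⟩
  · rw [hw, Finset.mem_Icc]; omega
  · rcases hd with hd | hd
    · rw [overlap, if_pos (by omega)]
      exact max_eq_left (by omega)
    · rw [overlap, if_neg (by omega), max_eq_left (by omega), neg_zero]

lemma coeff_eq {n L : ℕ} {p : ℤ × ℤ} (hp : p ∈ T0set n L) :
    (if overlap L p.1 p.2 = 0 then idxWeight n L p.1 p.2 else 0) = (((n:ℝ))^2)⁻¹ := by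
  rw [T0set, Finset.mem_filter, Finset.mem_product] at hp
  rw [if_pos hp.2.2, idxWeight, if_pos ⟨hp.1.1, hp.2.1⟩]

lemma coeff_zero {n L : ℕ} (hL : 1 ≤ L) {p : ℤ × ℤ}
    (hp : p ∉ (Finset.Icc 1 (n:ℤ)) ×ˢ (Finset.Icc (2-(L:ℤ)) ((n:ℤ)+L-1))) :
    idxWeight n L p.1 p.2 = 0 := by
  rw [Finset.mem_product] at hp
  push_neg at hp
  rw [idxWeight, if_neg]
  rintro ⟨ha, hb⟩
  rw [Finset.mem_Icc] at ha
  exact absurd (window_subset hL hb ha.1 ha.2) (hp (by rw [Finset.mem_Icc]; omega))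

lemma coeff_nonneg {n L : ℕ} (p : ℤ × ℤ) :
    0 ≤ if overlap L p.1 p.2 = 0 then idxWeight n L p.1 p.2 else 0 := by
  rw [idxWeight]
  split_ifs <;> positivity

lemma den_eq (n L : ℕ) (hL : 1 ≤ L) :
    (∑' p : ℤ × ℤ, if overlap L p.1 p.2 = 0 then idxWeight n L p.1 p.2 else 0)
      = ((T0set n L).card : ℝ) * (((n:ℝ))^2)⁻¹ := by
  have h0 : ∀ (p : ℤ × ℤ), p ∉ (Finset.Icc 1 (n:ℤ)) ×ˢ (Finset.Icc (2-(L:ℤ)) ((n:ℤ)+L-1)) →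
      (if overlap L p.1 p.2 = 0 then idxWeight n L p.1 p.2 else 0) = 0 := by
    intro p hp; rw [coeff_zero hL hp]; simp
  rw [tsum_eq_sum h0]
  have h1 : ∀ p ∈ (Finset.Icc 1 (n:ℤ)) ×ˢ (Finset.Icc (2-(L:ℤ)) ((n:ℤ)+L-1)),
      (if overlap L p.1 p.2 = 0 then idxWeight n L p.1 p.2 else 0)
      = if (p.2 ∈ window n L p.1 ∧ overlap L p.1 p.2 = 0) then (((n:ℝ))^2)⁻¹ else 0 := by
    intro p hp
    rw [Finset.mem_product] at hp
    by_cases hw : p.2 ∈ window n L p.1 <;> by_cases ho : overlap L p.1 p.2 = 0 <;>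
      simp [idxWeight, hw, ho, hp.1]
  rw [Finset.sum_congr rfl h1, ← Finset.sum_filter, Finset.sum_const, nsmul_eq_mul]
  rfl

lemma bad_card (n L g : ℕ) (hL : 1 ≤ L) (hg : 1 ≤ g) :
    ((T0set n L) \ (Gset n L g)).card ≤ 2*L*(n+2*L) + (n+2)*(2*(L+g)+1) := by
  classical
  set A : Finset (ℤ × ℤ) :=
    ((Finset.Icc 1 ((L:ℤ)-1)) ∪ (Finset.Icc ((n:ℤ)-L+2) (n:ℤ))) ×ˢ
      (Finset.Icc (2-(L:ℤ)) ((n:ℤ)+L-1)) with hA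
  set Bf : Finset (ℤ × ℤ) :=
    ((T0set n L) \ (Gset n L g)).filter (fun p => (L:ℤ) ≤ p.1 ∧ p.1 ≤ (n:ℤ)-L+1) with hB
  have hsub : (T0set n L) \ (Gset n L g) ⊆ A ∪ Bf := by
    intro p hp
    by_cases hmid : (L:ℤ) ≤ p.1 ∧ p.1 ≤ (n:ℤ)-L+1
    · exact Finset.mem_union_right _ (Finset.mem_filter.mpr ⟨hp, hmid⟩)
    · apply Finset.mem_union_left
      have hp' := Finset.mem_sdiff.mp hp
      have hT := hp'.1
      rw [T0set, Finset.mem_filter, Finset.mem_product, Finset.mem_Icc, Finset.mem_Icc] at hT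
      rw [hA, Finset.mem_product, Finset.mem_union, Finset.mem_Icc, Finset.mem_Icc,
        Finset.mem_Icc]
      exact ⟨by omega, by omega⟩
  have hcard := Finset.card_le_card hsub
  have hAcard : A.card ≤ 2*L*(n+2*L) := by
    rw [hA, Finset.card_product]
    have h1 : ((Finset.Icc 1 ((L:ℤ)-1)) ∪ (Finset.Icc ((n:ℤ)-L+2) (n:ℤ))).card ≤ 2*L := by
      apply le_trans (Finset.card_union_le _ _)
      rw [Int.card_Icc, Int.card_Icc]
      omega
    have h2 : (Finset.Icc (2-(L:ℤ)) ((n:ℤ)+L-1)).card ≤ n+2*L := by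
      rw [Int.card_Icc]; omega
    exact Nat.mul_le_mul h1 h2
  have hBcard : Bf.card ≤ (n+2)*(2*(L+g)+1) := by
    have hinj : Bf.card ≤ ((Finset.Icc (L:ℤ) ((n:ℤ)-L+1)) ×ˢ
        (Finset.Icc (-((L:ℤ)+g)) ((L:ℤ)+g))).card := by
      apply Finset.card_le_card_of_injOn (fun p => (p.1, p.2 - p.1))
      · intro p hp
        rw [hB, Finset.mem_coe, Finset.mem_filter] at hp
        obtain ⟨hpd, hmid⟩ := hp
        rw [Finset.mem_sdiff] at hpd
        obtain ⟨hT, hG⟩ := hpd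
        have hT' := hT
        rw [T0set, Finset.mem_filter, Finset.mem_product, Finset.mem_Icc, Finset.mem_Icc] at hT'
        have hwin : p.2 ∈ Finset.Icc 1 (n:ℤ) := by
          rw [← mem_window_middle hmid.1 hmid.2]; exact hT'.2.1
        rw [Finset.mem_Icc] at hwin
        have hnG : ¬(p.1 + (L:ℤ) - 1 + g ≤ p.2 ∨ p.2 + (L:ℤ) - 1 + g ≤ p.1) := by
          intro hc
          apply hG
          rw [Gset, Finset.mem_filter, Finset.mem_product, Finset.mem_Icc, Finset.mem_Icc]
          exact ⟨⟨⟨hmid.1, hmid.2⟩, ⟨hwin.1, hwin.2⟩⟩, hc⟩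
        push_neg at hnG
        rw [Finset.mem_coe, Finset.mem_product, Finset.mem_Icc, Finset.mem_Icc]
        dsimp only
        omega
      · intro p _ q _ h
        rw [Prod.mk.injEq] at h
        exact Prod.ext h.1 (by omega)
    apply le_trans hinj
    rw [Finset.card_product, Int.card_Icc, Int.card_Icc]
    have e1 : ((n:ℤ)-L+1+1-L).toNat ≤ n+2 := by omega
    have e2 : ((L:ℤ)+g+1-(-((L:ℤ)+g))).toNat ≤ 2*(L+g)+1 := by omega
    exact Nat.mul_le_mul e1 e2
  calc ((T0set n L) \ (Gset n L g)).card ≤ A.card + Bf.card :=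
        le_trans hcard (Finset.card_union_le _ _)
    _ ≤ _ := Nat.add_le_add hAcard hBcard

lemma G_card_lower (n L g : ℕ) (hL : 1 ≤ L) (hg : 1 ≤ g) (h8 : 8*(L+g+2) ≤ n) :
    n^2 ≤ 16 * (Gset n L g).card := by
  classical
  set m : ℕ := n/2 with hm
  have hR : (Finset.Icc (L:ℤ) (m:ℤ)) ×ˢ (Finset.Icc ((m:ℤ)+L+g) (n:ℤ)) ⊆ Gset n L g := by
    intro p hp
    rw [Finset.mem_product, Finset.mem_Icc, Finset.mem_Icc] at hp
    rw [Gset, Finset.mem_filter, Finset.mem_product, Finset.mem_Icc, Finset.mem_Icc]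
    have hm2 : 2*m ≤ n ∧ n ≤ 2*m+1 := by omega
    refine ⟨⟨⟨hp.1.1, by omega⟩, by omega⟩, Or.inl (by omega)⟩
  have hcard := Finset.card_le_card hR
  rw [Finset.card_product, Int.card_Icc, Int.card_Icc] at hcard
  have ha : n ≤ 4 * ((m:ℤ)+1-L).toNat := by omega
  have hb : n ≤ 4 * ((n:ℤ)+1-((m:ℤ)+L+g)).toNat := by omega
  calc n^2 = n*n := sq n
    _ ≤ (4*((m:ℤ)+1-L).toNat) * (4*((n:ℤ)+1-((m:ℤ)+L+g)).toNat) := Nat.mul_le_mul ha hb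
    _ = 16 * (((m:ℤ)+1-L).toNat * ((n:ℤ)+1-((m:ℤ)+L+g)).toNat) := by ring
    _ ≤ 16 * (Gset n L g).card := Nat.mul_le_mul_left 16 hcard

end Counting

section Limits

lemma log_div_tendsto : Tendsto (fun n : ℕ => Real.log n / n) atTop (nhds 0) := by
  have h := Real.tendsto_pow_log_div_mul_add_atTop 1 0 1 one_ne_zero
  simp only [pow_one, one_mul, add_zero] at h
  exact h.comp tendsto_natCast_atTop_atTop

lemma ell_ratio_tendsto (β : ℝ) (hβ : 0 < β) :
    Tendsto (fun n : ℕ => (ell β n : ℝ) / n) atTop (nhds 0) := by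
  apply squeeze_zero' (Filter.Eventually.of_forall fun n => by positivity)
    (g := fun n : ℕ => β * (Real.log n / n) + 1 / n)
  · filter_upwards [eventually_ge_atTop 1] with n hn
    have hn0 : (0:ℝ) < n := by exact_mod_cast hn
    have hlog : 0 ≤ β * Real.log n :=
      mul_nonneg hβ.le (Real.log_nonneg (by exact_mod_cast hn))
    have h1 : (ell β n : ℝ) ≤ β * Real.log n + 1 := (Nat.ceil_lt_add_one hlog).le
    rw [div_le_iff₀ hn0]
    field_simp
    linarith
  · have := (log_div_tendsto.const_mul β).add tendsto_one_div_atTop_nhds_zero_nat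
    simpa using this

lemma rpow_ratio_tendsto {θ : ℝ} (hθ1 : θ < 1) :
    Tendsto (fun n : ℕ => ((max 1 ⌈(n:ℝ)^θ⌉₊ : ℕ) : ℝ) / n) atTop (nhds 0) := by
  apply squeeze_zero' (Filter.Eventually.of_forall fun n => by positivity)
    (g := fun n : ℕ => (n:ℝ)^(θ-1) + 2 / n)
  · filter_upwards [eventually_ge_atTop 1] with n hn
    have hn0 : (0:ℝ) < n := by exact_mod_cast hn
    have hy0 : (0:ℝ) ≤ (n:ℝ)^θ := Real.rpow_nonneg hn0.le θ
    have h2 : ((max 1 ⌈(n:ℝ)^θ⌉₊ : ℕ) : ℝ) ≤ (n:ℝ)^θ + 1 := by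
      push_cast [Nat.cast_max]
      refine max_le (by linarith) ?_
      have := Nat.ceil_lt_add_one hy0
      linarith
    rw [div_le_iff₀ hn0]
    have he : (n:ℝ)^(θ-1) * n = (n:ℝ)^θ := by
      rw [Real.rpow_sub hn0, Real.rpow_one, div_mul_cancel₀ _ hn0.ne']
    have hthis : ((n:ℝ)^(θ-1) + 2/n) * n = (n:ℝ)^θ + 2 := by
      rw [add_mul, he, div_mul_cancel₀ _ hn0.ne']
    rw [hthis]
    linarith
  · have h1 : Tendsto (fun n : ℕ => (n:ℝ)^(θ-1)) atTop (nhds 0) := by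
      have := (tendsto_rpow_neg_atTop (y := 1-θ) (by linarith)).comp
        (tendsto_natCast_atTop_atTop (R := ℝ))
      simpa [Function.comp_def, show -(1-θ) = θ-1 by ring] using this
    have h2 : Tendsto (fun n : ℕ => 2 / (n:ℝ)) atTop (nhds 0) := by
      have := tendsto_one_div_atTop_nhds_zero_nat.const_mul (2:ℝ)
      simpa [div_eq_mul_inv] using this
    simpa using h1.add h2

end Limits

set_option maxHeartbeats 1600000 in
/-- Conditioned on no overlap, the joint law of the two reads is
asymptotically lower bounded by the product of their marginal laws. -/
theorem asymptotic_independence_given_no_overlap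
    (μ : Measure (ℤ → 𝒳)) [IsProbabilityMeasure μ]
    (herg : Ergodic (shift (𝒳 := 𝒳)) μ)
    (β : ℝ) (hβ : 0 < β)
    -- the minus-infinity-order Rényi entropy rate exists and is finite
    (Hinf : ℝ) (hHinf : Tendsto (fun t : ℕ => maxInfo μ t / t) atTop (nhds Hinf))
    -- polynomially decaying strong mixing coefficients
    (η : ℝ) (hη : 0 < η)
    (hmix : ∀ s : ℕ, 1 ≤ s → mixCoef μ s ≤ (s : ℝ) ^ (-(β * Hinf + η))) :
    ∃ ξ : ℕ → ℝ, Tendsto ξ atTop (nhds 1) ∧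
      ∀ᶠ n : ℕ in atTop, ∀ x₁ x₂ : Fin (ell β n) → 𝒳,
        ξ n * (blockPmf μ 1 (ell β n) x₁ * blockPmf μ 1 (ell β n) x₂) ≤
          (∑' p : ℤ × ℤ,
              (if overlap (ell β n) p.1 p.2 = 0 then idxWeight n (ell β n) p.1 p.2 else 0) *
                (μ {ω | (∀ k : Fin (ell β n), ω (p.1 + ((k : ℕ) : ℤ)) = x₁ k) ∧
                    ∀ k : Fin (ell β n), ω (p.2 + ((k : ℕ) : ℤ)) = x₂ k}).toReal) /
            (∑' p : ℤ × ℤ,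
              if overlap (ell β n) p.1 p.2 = 0 then idxWeight n (ell β n) p.1 p.2 else 0) := by
  classical
  have hmp : MeasurePreserving (shift (𝒳 := 𝒳)) μ μ := herg.toMeasurePreserving
  have hH0 : 0 ≤ Hinf :=
    ge_of_tendsto' hHinf fun t => div_nonneg (maxInfo_nonneg μ t) (Nat.cast_nonneg t)
  set ε : ℝ := η / (4*β) with hε
  have hεpos : 0 < ε := by rw [hε]; positivity
  have hpos : 0 < β * Hinf + η := by nlinarith
  set θ : ℝ := (β*Hinf + η/2)/(β*Hinf + η) with hθ
  have hθmul : θ * (β*Hinf + η) = β*Hinf + η/2 := div_mul_cancel₀ _ hpos.ne'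
  have hθ1 : θ < 1 := (div_lt_one hpos).mpr (by linarith)
  set gg : ℕ → ℕ := fun n => max 1 ⌈(n:ℝ)^θ⌉₊ with hgg
  have hg1 : ∀ n, 1 ≤ gg n := fun n => le_max_left _ _
  set epsn : ℕ → ℝ := fun n => Real.exp (Hinf + ε) * (n:ℝ)^(-(η/4)) with hepsn
  have hepsn0 : ∀ n, 0 ≤ epsn n := by
    intro n; rw [hepsn]; positivity
  have heps : Tendsto epsn atTop (nhds 0) := by
    have h1 : Tendsto (fun n : ℕ => (n:ℝ)^(-(η/4))) atTop (nhds 0) :=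
      (tendsto_rpow_neg_atTop (by positivity)).comp (tendsto_natCast_atTop_atTop (R := ℝ))
    have := h1.const_mul (Real.exp (Hinf + ε))
    rw [hepsn]; simpa using this
  have hu := ell_ratio_tendsto β hβ
  have hv : Tendsto (fun n : ℕ => (gg n : ℝ) / n) atTop (nhds 0) := rpow_ratio_tendsto hθ1
  have hw := tendsto_one_div_atTop_nhds_zero_nat (𝕜 := ℝ)
  have hlogT : Tendsto (fun n : ℕ => β * Real.log n) atTop atTop :=
    Tendsto.const_mul_atTop hβ (Real.tendsto_log_atTop.comp tendsto_natCast_atTop_atTop)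
  -- eventual facts
  have evL1 : ∀ᶠ n : ℕ in atTop, 1 ≤ ell β n := by
    filter_upwards [hlogT.eventually_ge_atTop 1] with n hn
    simp only [ell]
    exact Nat.one_le_iff_ne_zero.mpr (Nat.ceil_pos.mpr (by linarith)).ne'
  have hevt : ∀ᶠ t : ℕ in atTop, maxInfo μ t / t ≤ Hinf + ε :=
    hHinf.eventually (eventually_le_nhds (by linarith))
  obtain ⟨T₀, hT₀⟩ := eventually_atTop.mp hevt
  have evMax : ∀ᶠ n : ℕ in atTop, maxInfo μ (ell β n) ≤ (ell β n : ℝ) * (Hinf + ε) := by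
    filter_upwards [hlogT.eventually_ge_atTop ((T₀:ℝ) + 1), evL1] with n hn hL1
    have hTL : T₀ ≤ ell β n := by
      have h1 : ((T₀:ℝ) + 1) ≤ (ell β n : ℝ) := le_trans hn (Nat.le_ceil _)
      exact_mod_cast le_trans (by linarith : (T₀:ℝ) ≤ (T₀:ℝ) + 1) h1
    have h2 := hT₀ (ell β n) hTL
    have hLpos : (0:ℝ) < (ell β n : ℝ) := by exact_mod_cast hL1
    rw [div_le_iff₀ hLpos] at h2
    linarith [h2]
  have ev8 : ∀ᶠ n : ℕ in atTop, 8*(ell β n + gg n + 2) ≤ n := by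
    filter_upwards [hu.eventually (eventually_le_nhds (show (0:ℝ) < 1/32 by norm_num)),
      hv.eventually (eventually_le_nhds (show (0:ℝ) < 1/32 by norm_num)),
      hw.eventually (eventually_le_nhds (show (0:ℝ) < 1/32 by norm_num)),
      eventually_ge_atTop 1] with n h1 h2 h3 h4
    have hn0 : (0:ℝ) < n := by exact_mod_cast h4
    rw [div_le_div_iff₀ hn0 (by norm_num)] at h1 h2 h3
    have : (8:ℝ)*((ell β n : ℝ) + (gg n : ℝ) + 2) ≤ n := by linarith
    exact_mod_cast this
  have evLlog : ∀ᶠ n : ℕ in atTop, (ell β n : ℝ) ≤ β * Real.log n + 1 := by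
    filter_upwards [eventually_ge_atTop 1] with n hn
    have hlog : 0 ≤ β * Real.log n :=
      mul_nonneg hβ.le (Real.log_nonneg (by exact_mod_cast hn))
    exact (Nat.ceil_lt_add_one hlog).le
  refine ⟨fun n => (1 - epsn n) *
      (((Gset n (ell β n) (gg n)).card : ℝ) / ((T0set n (ell β n)).card : ℝ)), ?_, ?_⟩
  · -- Tendsto ξ → 1
    set ub : ℕ → ℝ := fun n =>
      16*(12*((ell β n : ℝ)/n) + 6*((gg n : ℝ)/n) + 3*(1/(n:ℝ))) with hub_def
    have hub : Tendsto ub atTop (nhds 0) := by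
      have h := (((hu.const_mul (12:ℝ)).add (hv.const_mul 6)).add
        (hw.const_mul 3)).const_mul (16:ℝ)
      rw [hub_def]
      norm_num at h
      convert h using 2 with n
      ring
    have hlo : Tendsto (fun n => (1 - epsn n)*(1 - ub n)) atTop (nhds 1) := by
      have hc : Tendsto (fun _ : ℕ => (1:ℝ)) atTop (nhds 1) := tendsto_const_nhds
      have h := (hc.sub heps).mul (hc.sub hub)
      norm_num at h
      exact h
    apply tendsto_of_tendsto_of_tendsto_of_le_of_le' hlo tendsto_const_nhds
    · -- lower bound eventually
      filter_upwards [evL1, ev8, heps.eventually (eventually_le_nhds one_pos),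
        eventually_ge_atTop 1] with n hL1 h8 hek hn1
      set L := ell β n
      set g := gg n
      have hGsubT := Gsub (n := n) hL1 (hg1 n)
      have hTA : ((T0set n L) \ (Gset n L g)).card + (Gset n L g).card = (T0set n L).card :=
        Finset.card_sdiff_add_card_eq_card hGsubT
      have hA16 : n^2 ≤ 16*(Gset n L g).card := G_card_lower n L g hL1 (hg1 n) h8
      have hApos : 0 < (Gset n L g).card := by
        have h1 : 1 ≤ n^2 := Nat.one_le_pow _ _ hn1
        omega
      have hnr0 : (0:ℝ) < n := by exact_mod_cast hn1
      have hArpos : (0:ℝ) < ((Gset n L g).card : ℝ) := by exact_mod_cast hApos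
      have hA16r : ((n:ℝ))^2 ≤ 16*((Gset n L g).card : ℝ) := by exact_mod_cast hA16
      have hBb := bad_card n L g hL1 (hg1 n)
      have hLn : (L:ℝ) ≤ (n:ℝ) := by
        have : L ≤ n := by omega
        exact_mod_cast this
      have hgn : (g:ℝ) ≤ (n:ℝ) := by
        have : g ≤ n := by omega
        exact_mod_cast this
      have h8r : 8*((L:ℝ) + (g:ℝ) + 2) ≤ (n:ℝ) := by exact_mod_cast h8
      have hBr : (((T0set n L) \ (Gset n L g)).card : ℝ)
          ≤ (12*(L:ℝ) + 6*(g:ℝ) + 3)*(n:ℝ) := by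
        have hBr0 : (((T0set n L) \ (Gset n L g)).card : ℝ)
            ≤ 2*(L:ℝ)*((n:ℝ)+2*(L:ℝ)) + ((n:ℝ)+2)*(2*((L:ℝ)+(g:ℝ))+1) := by
          exact_mod_cast hBb
        have hL0 : (0:ℝ) ≤ (L:ℝ) := Nat.cast_nonneg L
        have hg0 : (0:ℝ) ≤ (g:ℝ) := Nat.cast_nonneg g
        nlinarith [mul_le_mul_of_nonneg_left (show (L:ℝ) ≤ (n:ℝ)/8 by linarith)
          (show (0:ℝ) ≤ 4*(L:ℝ) by linarith)]
      have hubn0 : 0 ≤ ub n := by rw [hub_def]; positivity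
      have hfrac : (((T0set n L) \ (Gset n L g)).card : ℝ) / ((Gset n L g).card : ℝ)
          ≤ ub n := by
        rw [div_le_iff₀ hArpos]
        have h1 : ub n * ((n:ℝ)^2/16) = (12*(L:ℝ) + 6*(g:ℝ) + 3)*(n:ℝ) := by
          rw [hub_def]
          field_simp
          ring
        calc (((T0set n L) \ (Gset n L g)).card : ℝ)
            ≤ (12*(L:ℝ) + 6*(g:ℝ) + 3)*(n:ℝ) := hBr
          _ = ub n * ((n:ℝ)^2/16) := h1.symm
          _ ≤ ub n * ((Gset n L g).card : ℝ) :=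
              mul_le_mul_of_nonneg_left (by linarith) hubn0
      have hT0r : ((T0set n L).card : ℝ)
          = (((T0set n L) \ (Gset n L g)).card : ℝ) + ((Gset n L g).card : ℝ) := by
        exact_mod_cast hTA.symm
      set Ar := ((Gset n L g).card : ℝ)
      set Br := (((T0set n L) \ (Gset n L g)).card : ℝ)
      have hBr0' : 0 ≤ Br := Nat.cast_nonneg _
      have hdenpos : 0 < Br + Ar := by linarith
      have heq2 : Ar/(Br+Ar) = 1 - Br/(Br+Ar) := by
        rw [eq_sub_iff_add_eq, ← add_div, add_comm Ar Br, div_self hdenpos.ne']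
      have h3 : Br/(Br+Ar) ≤ Br/Ar := by
        rw [div_le_div_iff₀ hdenpos hArpos]
        nlinarith
      have hrlow : 1 - ub n ≤ Ar/(Br+Ar) := by
        rw [heq2]
        have := le_trans h3 hfrac
        linarith
      rw [hT0r]
      calc (1 - epsn n)*(1 - ub n) ≤ (1 - epsn n) * (Ar/(Br+Ar)) :=
            mul_le_mul_of_nonneg_left hrlow (by linarith)
        _ = (1 - epsn n) * (Ar/(Br+Ar)) := rfl
    · -- upper bound eventually
      filter_upwards [evL1, ev8, eventually_ge_atTop 1] with n hL1 h8 hn1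
      set L := ell β n
      set g := gg n
      have hGsubT := Gsub (n := n) hL1 (hg1 n)
      have hA16 : n^2 ≤ 16*(Gset n L g).card := G_card_lower n L g hL1 (hg1 n) h8
      have hApos : 0 < (Gset n L g).card := by
        have h1 : 1 ≤ n^2 := Nat.one_le_pow _ _ hn1
        omega
      have hT0pos : 0 < (T0set n L).card := lt_of_lt_of_le hApos (Finset.card_le_card hGsubT)
      have hT0rpos : (0:ℝ) < ((T0set n L).card : ℝ) := by exact_mod_cast hT0pos
      have hr1 : ((Gset n L g).card : ℝ) / ((T0set n L).card : ℝ) ≤ 1 := by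
        rw [div_le_one hT0rpos]
        exact_mod_cast Finset.card_le_card hGsubT
      have hr0 : 0 ≤ ((Gset n L g).card : ℝ) / ((T0set n L).card : ℝ) := by positivity
      nlinarith [hepsn0 n]
  · -- main inequality eventually
    filter_upwards [evL1, ev8, evMax, evLlog, eventually_ge_atTop 1] with n hL1 h8 hmax hLlog hn1
    set t := ell β n with ht
    set g := gg n with hgdef
    intro x₁ x₂
    have hnr0 : (0:ℝ) < n := by exact_mod_cast hn1
    have hGsubT := Gsub (n := n) (L := t) (g := g) hL1 (hg1 n)
    have hA16 : n^2 ≤ 16*(Gset n t g).card := G_card_lower n t g hL1 (hg1 n) h8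
    have hApos : 0 < (Gset n t g).card := by
      have h1 : 1 ≤ n^2 := Nat.one_le_pow _ _ hn1
      omega
    have hT0pos : 0 < (T0set n t).card := lt_of_lt_of_le hApos (Finset.card_le_card hGsubT)
    have hT0rpos : (0:ℝ) < ((T0set n t).card : ℝ) := by exact_mod_cast hT0pos
    have hDen := den_eq n t hL1
    have hDenpos : (0:ℝ) <
        ∑' p : ℤ × ℤ, if overlap t p.1 p.2 = 0 then idxWeight n t p.1 p.2 else 0 := by
      rw [hDen]
      apply mul_pos hT0rpos
      positivity
    set P₁ := blockPmf μ 1 t x₁ with hP₁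
    set P₂ := blockPmf μ 1 t x₂ with hP₂
    have hNumNonneg : (0:ℝ) ≤ ∑' p : ℤ × ℤ,
        (if overlap t p.1 p.2 = 0 then idxWeight n t p.1 p.2 else 0) *
          (μ {ω | (∀ k : Fin t, ω (p.1 + ((k : ℕ) : ℤ)) = x₁ k) ∧
              ∀ k : Fin t, ω (p.2 + ((k : ℕ) : ℤ)) = x₂ k}).toReal :=
      tsum_nonneg fun p => mul_nonneg (coeff_nonneg p) ENNReal.toReal_nonneg
    by_cases hP1z : P₁ = 0
    · rw [hP1z, zero_mul, mul_zero]
      exact div_nonneg hNumNonneg hDenpos.le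
    by_cases hP2z : P₂ = 0
    · rw [hP2z, mul_zero, mul_zero]
      exact div_nonneg hNumNonneg hDenpos.le
    have hP1pos : 0 < P₁ := lt_of_le_of_ne ENNReal.toReal_nonneg (Ne.symm hP1z)
    have hP2pos : 0 < P₂ := lt_of_le_of_ne ENNReal.toReal_nonneg (Ne.symm hP2z)
    have hPmin : ∀ (x : Fin t → 𝒳), 0 < blockPmf μ 1 t x →
        Real.exp (-(t:ℝ)*(Hinf+ε)) ≤ blockPmf μ 1 t x := by
      intro x hx
      calc Real.exp (-(t:ℝ)*(Hinf+ε)) ≤ Real.exp (-(maxInfo μ t)) := by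
            apply Real.exp_le_exp.mpr
            linarith [hmax]
        _ ≤ blockPmf μ 1 t x := pmin_bound μ t x hx
    have hchain : ∀ (P : ℝ), Real.exp (-(t:ℝ)*(Hinf+ε)) ≤ P →
        ∀ s : ℕ, 1 ≤ s → (n:ℝ)^θ ≤ (s:ℝ) → mixCoef μ s ≤ epsn n * P := by
      intro P hPm s hs1 hsθ
      calc mixCoef μ s ≤ (s:ℝ)^(-(β*Hinf+η)) := hmix s hs1
        _ ≤ (n:ℝ)^(-(β*Hinf+η/2)) := rpow_gap_bound hθmul hpos hn1 hsθ
        _ ≤ Real.exp (Hinf+ε) * (n:ℝ)^(-(η/4)) * Real.exp (-(t:ℝ)*(Hinf+ε)) := by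
            rw [hε]
            exact key_exp_ineq hβ hH0 hη hn1 hLlog
        _ = epsn n * Real.exp (-(t:ℝ)*(Hinf+ε)) := by rw [hepsn]
        _ ≤ epsn n * P := mul_le_mul_of_nonneg_left hPm (hepsn0 n)
    have hsθgen : ∀ s : ℕ, (g:ℤ) ≤ (s:ℤ) → (n:ℝ)^θ ≤ (s:ℝ) := by
      intro s hgs
      have h1 : (n:ℝ)^θ ≤ (⌈(n:ℝ)^θ⌉₊ : ℝ) := Nat.le_ceil _
      have h2 : (⌈(n:ℝ)^θ⌉₊ : ℕ) ≤ g := le_max_right _ _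
      have h3 : g ≤ s := by exact_mod_cast hgs
      calc (n:ℝ)^θ ≤ (⌈(n:ℝ)^θ⌉₊ : ℝ) := h1
        _ ≤ (s:ℝ) := by exact_mod_cast le_trans h2 h3
    have hpair : ∀ p ∈ Gset n t g,
        ((((n:ℝ))^2)⁻¹) * ((1 - epsn n) * (P₁ * P₂)) ≤
          (if overlap t p.1 p.2 = 0 then idxWeight n t p.1 p.2 else 0) *
            (μ {ω | (∀ k : Fin t, ω (p.1 + ((k : ℕ) : ℤ)) = x₁ k) ∧
                ∀ k : Fin t, ω (p.2 + ((k : ℕ) : ℤ)) = x₂ k}).toReal := by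
      intro p hp
      rw [coeff_eq (hGsubT hp)]
      apply mul_le_mul_of_nonneg_left ?_ (by positivity)
      have hset : {ω : ℤ → 𝒳 | (∀ k : Fin t, ω (p.1 + ((k : ℕ) : ℤ)) = x₁ k) ∧
          ∀ k : Fin t, ω (p.2 + ((k : ℕ) : ℤ)) = x₂ k} = blk p.1 t x₁ ∩ blk p.2 t x₂ := rfl
      rw [hset]
      rw [Gset, Finset.mem_filter] at hp
      have hg1' := hg1 n
      rcases hp.2 with hd | hd
      · set s : ℕ := (p.2 - p.1 - t + 1).toNat with hs
        have hsv : (s:ℤ) = p.2 - p.1 - t + 1 := by rw [hs]; omega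
        have hs1 : 1 ≤ s := by omega
        have hsg : (g:ℤ) ≤ (s:ℤ) := by omega
        have hb : p.2 = p.1 + t - 1 + s := by omega
        have hpb := pair_bound μ hmp hb x₁ x₂ hP1pos
          (hchain P₂ (hPmin x₂ hP2pos) s hs1 (hsθgen s hsg))
        calc (1 - epsn n) * (P₁ * P₂) = (P₂ - epsn n * P₂) * P₁ := by ring
          _ ≤ _ := hpb
      · set s : ℕ := (p.1 - p.2 - t + 1).toNat with hs
        have hsv : (s:ℤ) = p.1 - p.2 - t + 1 := by rw [hs]; omega
        have hs1 : 1 ≤ s := by omega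
        have hsg : (g:ℤ) ≤ (s:ℤ) := by omega
        have hb : p.1 = p.2 + t - 1 + s := by omega
        have hpb := pair_bound μ hmp hb x₂ x₁ hP2pos
          (hchain P₁ (hPmin x₁ hP1pos) s hs1 (hsθgen s hsg))
        rw [Set.inter_comm]
        calc (1 - epsn n) * (P₁ * P₂) = (P₁ - epsn n * P₁) * P₂ := by ring
          _ ≤ _ := hpb
    have hNumsum : (∑' p : ℤ × ℤ,
        (if overlap t p.1 p.2 = 0 then idxWeight n t p.1 p.2 else 0) *
          (μ {ω | (∀ k : Fin t, ω (p.1 + ((k : ℕ) : ℤ)) = x₁ k) ∧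
              ∀ k : Fin t, ω (p.2 + ((k : ℕ) : ℤ)) = x₂ k}).toReal)
        = ∑ p ∈ (Finset.Icc 1 (n:ℤ)) ×ˢ (Finset.Icc (2-(t:ℤ)) ((n:ℤ)+t-1)),
            (if overlap t p.1 p.2 = 0 then idxWeight n t p.1 p.2 else 0) *
              (μ {ω | (∀ k : Fin t, ω (p.1 + ((k : ℕ) : ℤ)) = x₁ k) ∧
                  ∀ k : Fin t, ω (p.2 + ((k : ℕ) : ℤ)) = x₂ k}).toReal := by
      apply tsum_eq_sum
      intro p hp
      have hc0 : (if overlap t p.1 p.2 = 0 then idxWeight n t p.1 p.2 else 0) = 0 := by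
        by_cases h : overlap t p.1 p.2 = 0
        · rw [if_pos h]; exact coeff_zero hL1 hp
        · rw [if_neg h]
      rw [hc0, zero_mul]
    have hlow : ((Gset n t g).card : ℝ) * (((((n:ℝ))^2)⁻¹) * ((1 - epsn n) * (P₁ * P₂))) ≤
        ∑' p : ℤ × ℤ,
          (if overlap t p.1 p.2 = 0 then idxWeight n t p.1 p.2 else 0) *
            (μ {ω | (∀ k : Fin t, ω (p.1 + ((k : ℕ) : ℤ)) = x₁ k) ∧
                ∀ k : Fin t, ω (p.2 + ((k : ℕ) : ℤ)) = x₂ k}).toReal := by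
      rw [hNumsum]
      have hsub : Gset n t g ⊆ (Finset.Icc 1 (n:ℤ)) ×ˢ (Finset.Icc (2-(t:ℤ)) ((n:ℤ)+t-1)) :=
        le_trans hGsubT (Finset.filter_subset _ _)
      calc ((Gset n t g).card : ℝ) * (((((n:ℝ))^2)⁻¹) * ((1 - epsn n) * (P₁ * P₂)))
          = ∑ _p ∈ Gset n t g, (((((n:ℝ))^2)⁻¹) * ((1 - epsn n) * (P₁ * P₂))) := by
            rw [Finset.sum_const, nsmul_eq_mul]
        _ ≤ ∑ p ∈ Gset n t g,
              (if overlap t p.1 p.2 = 0 then idxWeight n t p.1 p.2 else 0) *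
                (μ {ω | (∀ k : Fin t, ω (p.1 + ((k : ℕ) : ℤ)) = x₁ k) ∧
                    ∀ k : Fin t, ω (p.2 + ((k : ℕ) : ℤ)) = x₂ k}).toReal :=
            Finset.sum_le_sum hpair
        _ ≤ _ := Finset.sum_le_sum_of_subset_of_nonneg hsub
            (fun p _ _ => mul_nonneg (coeff_nonneg p) ENNReal.toReal_nonneg)
    rw [hDen]
    have heqf : (1 - epsn n) * (((Gset n t g).card : ℝ) / ((T0set n t).card : ℝ)) * (P₁ * P₂)
        = (((Gset n t g).card : ℝ) * (((((n:ℝ))^2)⁻¹) * ((1 - epsn n) * (P₁ * P₂)))) /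
            (((T0set n t).card : ℝ) * ((((n:ℝ))^2)⁻¹)) := by
      field_simp
    rw [heqf]
    have hDpos : (0:ℝ) < ((T0set n t).card : ℝ) * ((((n:ℝ))^2)⁻¹) := by
      apply mul_pos hT0rpos
      positivity
    exact div_le_div_of_nonneg_right hlow hDpos.le


end
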